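/- General recovery theorem: let A₁, A₂ be algebras over the signature {¬,∘,∧,∨,→} with A₂ a subalgebra of A₁, D₁ ⊆ A₁, D₂ = D₁ ∩ A₂, and let L₁ = ⟨A₁,D₁⟩, L₂ = ⟨A₂,D₂⟩ be the corresponding matrix logics. Suppose there exists a formula ∘'(p) in the single atom p such that for every valuation ϑ over L₁ and every formula α: ϑ(∘'(α)) ∈ D₁ if and only if ϑ(α) ∈ A₂. Then for every set of formulas Γ and formula α: {∘'(q) : q ∈ Var(Γ∪{α})} ∪ Γ ⊢_{L₁} α if and only if Γ ⊢_{L₂} α. -/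
import Mathlib


/-- Formulas of the language with ¬, ∘, ∧, ∨, →. -/
inductive Fm : Type
  | atom : Nat → Fm
  | neg : Fm → Fm
  | circ : Fm → Fm
  | conj : Fm → Fm → Fm
  | disj : Fm → Fm → Fm
  | impl : Fm → Fm → Fm

/-- An algebra over the signature {¬, ∘, ∧, ∨, →}. -/
structure MAlg (A : Type*) where
  neg : A → A
  circ : A → A
  conj : A → A → A
  disj : A → A → A
  impl : A → A → A

/-- The valuation (homomorphism from the formula algebra) extending an atom assignment. -/
def evalM {A : Type*} (M : MAlg A) (v : Nat → A) : Fm → A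
  | .atom n => v n
  | .neg a => M.neg (evalM M v a)
  | .circ a => M.circ (evalM M v a)
  | .conj a b => M.conj (evalM M v a) (evalM M v b)
  | .disj a b => M.disj (evalM M v a) (evalM M v b)
  | .impl a b => M.impl (evalM M v a) (evalM M v b)

/-- S is (the carrier of) a subalgebra: a subset closed under all operations. -/
def ClosedSub {A : Type*} (M : MAlg A) (S : Set A) : Prop :=
  (∀ a ∈ S, M.neg a ∈ S) ∧ (∀ a ∈ S, M.circ a ∈ S) ∧
  (∀ a ∈ S, ∀ b ∈ S, M.conj a b ∈ S) ∧ (∀ a ∈ S, ∀ b ∈ S, M.disj a b ∈ S) ∧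
  (∀ a ∈ S, ∀ b ∈ S, M.impl a b ∈ S)

/-- Consequence relation of the matrix logic L₁ = ⟨A, D⟩. -/
def MCons {A : Type*} (M : MAlg A) (D : Set A) (Γ : Set Fm) (ψ : Fm) : Prop :=
  ∀ v : Nat → A, (∀ γ ∈ Γ, evalM M v γ ∈ D) → evalM M v ψ ∈ D

/-- Consequence relation of the matrix logic L₂ = ⟨A₂, D ∩ A₂⟩, where A₂ is the
subalgebra with carrier S: valuations are homomorphisms taking values in S. -/
def SubCons {A : Type*} (M : MAlg A) (S D : Set A) (Γ : Set Fm) (ψ : Fm) : Prop :=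
  ∀ v : Nat → A, (∀ n, v n ∈ S) →
    (∀ γ ∈ Γ, evalM M v γ ∈ D ∩ S) → evalM M v ψ ∈ D ∩ S


/-- Application of a substitution (a map from atoms to formulas) to a formula. -/
def subst (σ : Nat → Fm) : Fm → Fm
  | .atom n => σ n
  | .neg a => (subst σ a).neg
  | .circ a => (subst σ a).circ
  | .conj a b => (subst σ a).conj (subst σ b)
  | .disj a b => (subst σ a).disj (subst σ b)
  | .impl a b => (subst σ a).impl (subst σ b)

/-- The set of atoms occurring in a formula. -/
def fvars : Fm → Set Nat
  | .atom n => {n}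
  | .neg a => fvars a
  | .circ a => fvars a
  | .conj a b => fvars a ∪ fvars b
  | .disj a b => fvars a ∪ fvars b
  | .impl a b => fvars a ∪ fvars b

/-- The set of atoms occurring in a set of formulas. -/
def varsOf (Γ : Set Fm) : Set Nat := ⋃ γ ∈ Γ, fvars γ

theorem eval_congr' {A : Type*} (M : MAlg A) {v w : Nat → A} (t : Fm)
    (h : ∀ n ∈ fvars t, v n = w n) : evalM M v t = evalM M w t := by
  induction t with
  | atom n => exact h n rfl
  | neg a ih => simp only [evalM]; rw [ih h]
  | circ a ih => simp only [evalM]; rw [ih h]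
  | conj a b iha ihb =>
      simp only [evalM]
      rw [iha (fun n hn => h n (Set.mem_union_left _ hn)),
        ihb (fun n hn => h n (Set.mem_union_right _ hn))]
  | disj a b iha ihb =>
      simp only [evalM]
      rw [iha (fun n hn => h n (Set.mem_union_left _ hn)),
        ihb (fun n hn => h n (Set.mem_union_right _ hn))]
  | impl a b iha ihb =>
      simp only [evalM]
      rw [iha (fun n hn => h n (Set.mem_union_left _ hn)),
        ihb (fun n hn => h n (Set.mem_union_right _ hn))]

theorem eval_memS' {A : Type*} (M : MAlg A) {S : Set A} (hS : ClosedSub M S)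
    {v : Nat → A} (hv : ∀ n, v n ∈ S) (t : Fm) : evalM M v t ∈ S := by
  obtain ⟨h1, h2, h3, h4, h5⟩ := hS
  induction t with
  | atom n => exact hv n
  | neg a ih => exact h1 _ ih
  | circ a ih => exact h2 _ ih
  | conj a b iha ihb => exact h3 _ iha _ ihb
  | disj a b iha ihb => exact h4 _ iha _ ihb
  | impl a b iha ihb => exact h5 _ iha _ ihb

theorem fvars_nonempty' (t : Fm) : ∃ n, n ∈ fvars t := by
  induction t with
  | atom n => exact ⟨n, rfl⟩
  | neg a ih => exact ih
  | circ a ih => exact ih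
  | conj a b iha ihb => obtain ⟨n, hn⟩ := iha; exact ⟨n, Set.mem_union_left _ hn⟩
  | disj a b iha ihb => obtain ⟨n, hn⟩ := iha; exact ⟨n, Set.mem_union_left _ hn⟩
  | impl a b iha ihb => obtain ⟨n, hn⟩ := iha; exact ⟨n, Set.mem_union_left _ hn⟩

/-- General recovery theorem: if ∘'(p) is a formula in the single atom p such
that ϑ(∘'(α)) ∈ D₁ iff ϑ(α) ∈ A₂ for every valuation ϑ over L₁ = ⟨A₁,D₁⟩ and
formula α, then ∘'(Var(Γ∪{α})), Γ ⊢_{L₁} α iff Γ ⊢_{L₂} α, for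
L₂ = ⟨A₂, D₁ ∩ A₂⟩ the matrix logic of the subalgebra A₂ (with carrier S). -/
theorem stmt16 {A : Type*} (M : MAlg A) (S D : Set A) (hS : ClosedSub M S)
    (φ : Fm) (hsingle : fvars φ ⊆ {0})
    (hrec : ∀ (v : Nat → A) (α : Fm),
      evalM M v (subst (fun _ => α) φ) ∈ D ↔ evalM M v α ∈ S)
    (Γ : Set Fm) (α : Fm) :
    MCons M D
      ({ψ | ∃ q ∈ varsOf (insert α Γ), ψ = subst (fun _ => Fm.atom q) φ} ∪ Γ) α
      ↔ SubCons M S D Γ α := by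
  constructor
  · intro h v hvS hΓ
    have hSv : ∀ t, evalM M v t ∈ S := eval_memS' M hS hvS
    refine ⟨h v ?_, hSv α⟩
    rintro γ (⟨q, hq, rfl⟩ | hγ)
    · exact (hrec v (Fm.atom q)).mpr (hvS q)
    · exact (hΓ γ hγ).1
  · intro h v hv
    classical
    obtain ⟨q₀, hq₀⟩ := fvars_nonempty' α
    have hq₀' : q₀ ∈ varsOf (insert α Γ) :=
      Set.mem_biUnion (Set.mem_insert α Γ) hq₀
    have hmemS : ∀ q ∈ varsOf (insert α Γ), v q ∈ S := by
      intro q hq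
      exact (hrec v (Fm.atom q)).mp (hv _ (Or.inl ⟨q, hq, rfl⟩))
    set v' : Nat → A := fun n => if v n ∈ S then v n else v q₀ with hv'def
    have hv'S : ∀ n, v' n ∈ S := by
      intro n
      by_cases hn : v n ∈ S <;> simp [hv'def, hn, hmemS q₀ hq₀']
    have hagree : ∀ t : Fm, fvars t ⊆ varsOf (insert α Γ) →
        evalM M v' t = evalM M v t := by
      intro t ht
      apply eval_congr' M t
      intro n hn
      simp [hv'def, hmemS n (ht hn)]
    have hα : evalM M v' α ∈ D ∩ S := by
      apply h v' hv'S
      intro γ hγ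
      have hfv : fvars γ ⊆ varsOf (insert α Γ) :=
        fun n hn => Set.mem_biUnion (Set.mem_insert_of_mem α hγ) hn
      exact ⟨by rw [hagree γ hfv]; exact hv γ (Or.inr hγ),
        eval_memS' M hS hv'S γ⟩
    have : fvars α ⊆ varsOf (insert α Γ) :=
      fun n hn => Set.mem_biUnion (Set.mem_insert α Γ) hn
    rw [← hagree α this]
    exact hα.1
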